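/- For every natural number d and every real x with 0 ≤ x ≤ 1, setting t = 1/2^(2^d + 1), the following hold (real-exponent powers): (i) (((t·x)^(1/2^d)) · 2)^(2^d) · 2 = x; (ii) all intermediate values lie in [0,1], namely 0 ≤ t·x ≤ 1, 0 ≤ ((t·x)^(1/2^d)) · 2 ≤ 1, and 0 ≤ (((t·x)^(1/2^d)) · 2)^(2^d) ≤ 1. (This identity allows dividing a t-scaled signal by t using only square roots, squaring, and doubling, in place of a division gate.) -/

import Mathlib

/-- Dividing a `t`-scaled signal by `t = 1/2^(2^d + 1)` using only `2^d`-fold square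
roots (a real power with exponent `1/2^d`), doubling, `2^d`-fold squaring, and a final
doubling: the identity holds and all intermediate values stay in `[0,1]`. -/
theorem sqrt_simulates_division (d : ℕ) (x : ℝ) (hx0 : 0 ≤ x) (hx1 : x ≤ 1) :
    let t : ℝ := 1 / 2 ^ (2 ^ d + 1)
    ((((t * x) ^ ((1 : ℝ) / 2 ^ d)) * 2) ^ (2 ^ d : ℕ) * 2 = x) ∧
    (0 ≤ t * x ∧ t * x ≤ 1) ∧
    (0 ≤ ((t * x) ^ ((1 : ℝ) / 2 ^ d)) * 2 ∧ ((t * x) ^ ((1 : ℝ) / 2 ^ d)) * 2 ≤ 1) ∧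
    (0 ≤ (((t * x) ^ ((1 : ℝ) / 2 ^ d)) * 2) ^ (2 ^ d : ℕ) ∧
      (((t * x) ^ ((1 : ℝ) / 2 ^ d)) * 2) ^ (2 ^ d : ℕ) ≤ 1) := by
  intro t
  have ht0 : (0:ℝ) < t := by positivity
  have htx0 : 0 ≤ t * x := by positivity
  have htx1 : t * x ≤ 1 := by
    have : t ≤ 1 := by
      rw [div_le_one (by positivity)]
      exact one_le_pow₀ (by norm_num)
    calc t * x ≤ 1 * 1 := mul_le_mul this hx1 hx0 (by norm_num)
    _ = 1 := by norm_num
  have h2d : ((2:ℝ) ^ d) ≠ 0 := by positivity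
  -- key: ((t*x)^(1/2^d))^(2^d) = t*x
  have hkey : (((t * x) ^ ((1 : ℝ) / 2 ^ d)) : ℝ) ^ (2 ^ d : ℕ) = t * x := by
    rw [← Real.rpow_natCast ((t * x) ^ ((1 : ℝ) / 2 ^ d)) (2 ^ d),
      ← Real.rpow_mul htx0]
    push_cast
    rw [one_div_mul_cancel h2d, Real.rpow_one]
  have hr0 : 0 ≤ (t * x) ^ ((1 : ℝ) / 2 ^ d) := Real.rpow_nonneg htx0 _
  have hr2 : (t * x) ^ ((1 : ℝ) / 2 ^ d) ≤ 1 / 2 := by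
    have hle : t * x ≤ (1/2 : ℝ) ^ (2 ^ d : ℕ) := by
      have : t ≤ (1/2 : ℝ) ^ (2 ^ d : ℕ) := by
        show (1:ℝ) / 2 ^ (2 ^ d + 1) ≤ _
        rw [div_pow, one_pow, div_le_div_iff₀ (by positivity) (by positivity)]
        rw [one_mul, pow_succ]
        nlinarith [pow_pos (by norm_num : (0:ℝ) < 2) (2^d)]
      calc t * x ≤ t * 1 := by nlinarith
      _ = t := mul_one t
      _ ≤ _ := this
    calc (t * x) ^ ((1 : ℝ) / 2 ^ d)
        ≤ ((1/2 : ℝ) ^ (2 ^ d : ℕ)) ^ ((1 : ℝ) / 2 ^ d) :=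
          Real.rpow_le_rpow htx0 hle (by positivity)
      _ = 1/2 := by
          rw [← Real.rpow_natCast ((1:ℝ)/2) (2 ^ d), ← Real.rpow_mul (by norm_num)]
          push_cast
          rw [mul_one_div_cancel h2d, Real.rpow_one]
  have hmid1 : ((t * x) ^ ((1 : ℝ) / 2 ^ d)) * 2 ≤ 1 := by linarith
  have heq : (((t * x) ^ ((1 : ℝ) / 2 ^ d)) * 2) ^ (2 ^ d : ℕ)
      = (t * x) * 2 ^ (2 ^ d : ℕ) := by
    rw [mul_pow, hkey]
  refine ⟨?_, ⟨htx0, htx1⟩, ⟨by positivity, hmid1⟩, ⟨by positivity, ?_⟩⟩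
  · rw [heq]
    show 1 / 2 ^ (2 ^ d + 1) * x * 2 ^ 2 ^ d * 2 = x
    rw [pow_succ]
    field_simp
  · rw [heq]
    show 1 / 2 ^ (2 ^ d + 1) * x * 2 ^ 2 ^ d ≤ 1
    rw [pow_succ]
    have h2p : (0:ℝ) < 2 ^ (2^d) := by positivity
    rw [div_mul_eq_mul_div, one_mul, div_mul_eq_mul_div, div_le_one (by positivity)]
    nlinarith
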